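/- arXiv:2603.11916 — 2 statements merged into one kernel-verified Lean document; each statement's English description precedes it below -/
import Mathlib

section
/- The aggregated within-sample repulsion over all N circular windows satisfies ∑_{j=1}^N ∑_{i<k, i,k ∈ s_j} ‖x_{u_i} − x_{u_k}‖ = ∑_{1 ≤ r < v ≤ N} w(t_{rv}) ‖x_{u_r} − x_{u_v}‖, where t_{rv} = min(|r−v|, N−|r−v|) and w(t) = n − t if t < n and 0 otherwise. Assume n ≤ N/2. -/
open Finset

/-- Circular separation `t_{rv} = min(|r − v|, N − |r − v|)` of positions `r, v`. -/
def circSep (N : ℕ) (r v : Fin N) : ℕ :=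
  min ((r.val : ℤ) - v.val).natAbs (N - ((r.val : ℤ) - v.val).natAbs)

private lemma circSep_comm (N : ℕ) (r v : Fin N) : circSep N r v = circSep N v r := by
  unfold circSep; omega

private lemma mod_small' (a N : ℕ) (hN : 0 < N) (h : a < 2 * N) :
    a % N = if a < N then a else a - N := by
  split
  · exact Nat.mod_eq_of_lt ‹_›
  · rw [Nat.mod_eq_sub_mod (by omega), Nat.mod_eq_of_lt (by omega)]

private lemma circSep_add (N : ℕ) [NeZero N] (r d : Fin N) :
    circSep N r (r + d) = min d.val (N - d.val) := by
  have hN : 0 < N := Nat.pos_of_ne_zero (NeZero.ne N)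
  have hr := r.isLt; have hd := d.isLt
  have hval : (r + d).val = (r.val + d.val) % N := Fin.val_add r d
  have hmod : (r.val + d.val) % N =
      if r.val + d.val < N then r.val + d.val else r.val + d.val - N :=
    mod_small' _ _ hN (by omega)
  have habs : ∀ a b : ℕ, ((a : ℤ) - b).natAbs = if b ≤ a then a - b else b - a := by
    intro a b; split <;> omega
  unfold circSep
  rw [habs, hval, hmod]
  split_ifs <;> omega

/-- Symmetrization of a double sum of a symmetric function vanishing on the diagonal. -/
private lemma sym_double_sum {α : Type*} [LinearOrder α] (s : Finset α) (f : α → α → ℝ)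
    (hsym : ∀ a b, f a b = f b a) (hdiag : ∀ a, f a a = 0) :
    ∑ a ∈ s, ∑ b ∈ s, f a b = 2 * ∑ a ∈ s, ∑ b ∈ s, (if a < b then f a b else 0) := by
  have key : ∀ a b : α, f a b =
      (if a < b then f a b else 0) + (if b < a then f a b else 0) := by
    intro a b
    rcases lt_trichotomy a b with h | h | h
    · simp [h, not_lt_of_gt h]
    · subst h; simp [hdiag]
    · simp [h, not_lt_of_gt h]
  calc ∑ a ∈ s, ∑ b ∈ s, f a b
      = ∑ a ∈ s, ∑ b ∈ s, ((if a < b then f a b else 0) + (if b < a then f a b else 0)) := by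
        simp_rw [← key]
    _ = (∑ a ∈ s, ∑ b ∈ s, (if a < b then f a b else 0))
        + ∑ a ∈ s, ∑ b ∈ s, (if b < a then f a b else 0) := by
        simp [Finset.sum_add_distrib]
    _ = 2 * ∑ a ∈ s, ∑ b ∈ s, (if a < b then f a b else 0) := by
        rw [two_mul]
        congr 1
        rw [Finset.sum_comm]
        refine Finset.sum_congr rfl fun a _ => Finset.sum_congr rfl fun b _ => ?_
        rw [hsym]

open Fin.NatCast in
private lemma key_iff (N n : ℕ) [NeZero N] (hnN : n ≤ N) (a b : ℕ)
    (ha : a < n) (hb : b < n) (d : Fin N) :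
    ((b : Fin N) - (a : Fin N) = d) ↔ b = (a + d.val) % N := by
  rw [sub_eq_iff_eq_add, Fin.ext_iff, Fin.val_add, Fin.val_natCast, Fin.val_natCast,
    Nat.mod_eq_of_lt (lt_of_lt_of_le hb hnN)]
  rw [show (d.val + a % N) % N = (a + d.val) % N from by rw [Nat.add_mod_mod, Nat.add_comm]]

private lemma count1 (N n dv : ℕ) (hN : 0 < N) (h2 : 2 * n ≤ N) (hdv : dv < N) :
    ((Finset.range n).filter (fun a => (a + dv) % N < n)).card = n - min dv (N - dv) := by
  by_cases h1 : dv < n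
  · have hset : (Finset.range n).filter (fun a => (a + dv) % N < n) = Finset.range (n - dv) := by
      ext a
      simp only [Finset.mem_filter, Finset.mem_range]
      constructor
      · rintro ⟨h3, hmod⟩
        rw [Nat.mod_eq_of_lt (by omega)] at hmod; omega
      · intro h
        exact ⟨by omega, by rw [Nat.mod_eq_of_lt (by omega)]; omega⟩
    rw [hset, Finset.card_range]; omega
  · by_cases h3 : N - dv < n
    · have hset : (Finset.range n).filter (fun a => (a + dv) % N < n) = Finset.Ico (N - dv) n := by
        ext a
        simp only [Finset.mem_filter, Finset.mem_range, Finset.mem_Ico]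
        constructor
        · rintro ⟨h4, hmod⟩
          rw [mod_small' _ _ hN (by omega)] at hmod
          split_ifs at hmod <;> omega
        · rintro ⟨h4, h5⟩
          refine ⟨h5, ?_⟩
          rw [mod_small' _ _ hN (by omega)]
          split_ifs <;> omega
      rw [hset, Nat.card_Ico]; omega
    · have hset : (Finset.range n).filter (fun a => (a + dv) % N < n) = ∅ := by
        ext a
        simp only [Finset.mem_filter, Finset.mem_range, Finset.notMem_empty, iff_false,
          not_and]
        intro h4
        rw [Nat.mod_eq_of_lt (by omega)]; omega
      rw [hset, Finset.card_empty]; omega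

open Fin.NatCast in
private lemma count2 (N n : ℕ) [NeZero N] (h2 : 2 * n ≤ N) (d : Fin N) :
    (((Finset.range n) ×ˢ (Finset.range n)).filter
        (fun ab => ((ab.2 : Fin N) - (ab.1 : Fin N)) = d)).card
      = n - min d.val (N - d.val) := by
  have hN : 0 < N := Nat.pos_of_ne_zero (NeZero.ne N)
  have hnN : n ≤ N := by omega
  rw [← count1 N n d.val hN h2 d.isLt]
  refine Finset.card_bij' (fun ab _ => ab.1) (fun a _ => (a, (a + d.val) % N)) ?_ ?_ ?_ ?_
  · rintro ⟨a, b⟩ hab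
    simp only [Finset.mem_filter, Finset.mem_product, Finset.mem_range] at hab ⊢
    obtain ⟨⟨ha, hb⟩, hd⟩ := hab
    rw [key_iff N n hnN a b ha hb] at hd
    exact ⟨ha, hd ▸ hb⟩
  · intro a ha
    simp only [Finset.mem_filter, Finset.mem_product, Finset.mem_range] at ha ⊢
    obtain ⟨ha, hlt⟩ := ha
    exact ⟨⟨ha, hlt⟩, (key_iff N n hnN a _ ha hlt d).2 rfl⟩
  · rintro ⟨a, b⟩ hab
    simp only [Finset.mem_filter, Finset.mem_product, Finset.mem_range] at hab
    obtain ⟨⟨ha, hb⟩, hd⟩ := hab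
    rw [key_iff N n hnN a b ha hb] at hd
    simp [hd]
  · intro a _; rfl

open Fin.NatCast in
set_option maxHeartbeats 1000000 in
/-- The aggregated within-sample repulsion over all `N` circular windows
satisfies
`∑_{j=1}^N ∑_{i<k, i,k∈s_j} ‖x_{u_i} − x_{u_k}‖ = ∑_{1≤r<v≤N} w(t_{rv}) ‖x_{u_r} − x_{u_v}‖`,
where `t_{rv}` is the circular separation and `w(t) = n − t` if `t < n`, `0` otherwise
(`max(n − t, 0)`, i.e. truncated subtraction).  Assumes `n ≤ N/2`. -/
theorem aggregated_repulsion_identity {p : ℕ} (N n : ℕ) [NeZero N]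
    (hn : 0 < n) (h2 : 2 * n ≤ N)
    (x : Fin N → EuclideanSpace ℝ (Fin p)) (u : Equiv.Perm (Fin N)) :
    ∑ j : Fin N, ∑ a ∈ Finset.range n, ∑ b ∈ Finset.range n,
        (if a < b then ‖x (u (j + (a : Fin N))) - x (u (j + (b : Fin N)))‖ else 0) =
      ∑ r : Fin N, ∑ v : Fin N,
        (if r.val < v.val then
          ((n - circSep N r v : ℕ) : ℝ) * ‖x (u r) - x (u v)‖ else 0) := by
  have hN : 0 < N := Nat.pos_of_ne_zero (NeZero.ne N)
  set g : Fin N → Fin N → ℝ := fun r v => ‖x (u r) - x (u v)‖ with hg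
  have hgsym : ∀ r v, g r v = g v r := fun r v => by simp [hg, norm_sub_rev]
  have hgdiag : ∀ r, g r r = 0 := fun r => by simp [hg]
  set S : Fin N → ℝ := fun d => ∑ j : Fin N, g j (j + d) with hS
  -- reindexing the window sum
  have step2 : ∀ a' b' : Fin N, ∑ j : Fin N, g (j + a') (j + b') = S (b' - a') := by
    intro a' b'
    simp only [hS]
    rw [← Equiv.sum_comp (Equiv.addRight a') (fun k => g k (k + (b' - a')))]
    refine Finset.sum_congr rfl fun j _ => ?_
    have h1 : (Equiv.addRight a') j = j + a' := rfl
    have h2' : j + a' + (b' - a') = j + b' := by abel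
    rw [h1, h2']
  -- Left-hand side
  have hL : 2 * (∑ j : Fin N, ∑ a ∈ Finset.range n, ∑ b ∈ Finset.range n,
      (if a < b then g (j + (a : Fin N)) (j + (b : Fin N)) else 0)) =
      ∑ d : Fin N, ((n - min d.val (N - d.val) : ℕ) : ℝ) * S d := by
    rw [Finset.mul_sum]
    have step1 : ∀ j : Fin N, 2 * ∑ a ∈ Finset.range n, ∑ b ∈ Finset.range n,
        (if a < b then g (j + (a : Fin N)) (j + (b : Fin N)) else 0) =
        ∑ a ∈ Finset.range n, ∑ b ∈ Finset.range n, g (j + (a : Fin N)) (j + (b : Fin N)) := by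
      intro j
      rw [sym_double_sum (Finset.range n) (fun a b => g (j + (a : Fin N)) (j + (b : Fin N)))
        (fun a b => hgsym _ _) (fun a => hgdiag _)]
    simp_rw [step1]
    calc ∑ j : Fin N, ∑ a ∈ Finset.range n, ∑ b ∈ Finset.range n,
          g (j + (a : Fin N)) (j + (b : Fin N))
        = ∑ a ∈ Finset.range n, ∑ b ∈ Finset.range n, ∑ j : Fin N,
          g (j + (a : Fin N)) (j + (b : Fin N)) := by
          rw [Finset.sum_comm]
          exact Finset.sum_congr rfl fun a _ => Finset.sum_comm
      _ = ∑ a ∈ Finset.range n, ∑ b ∈ Finset.range n, S ((b : Fin N) - (a : Fin N)) := by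
          refine Finset.sum_congr rfl fun a _ => Finset.sum_congr rfl fun b _ => ?_
          exact step2 _ _
      _ = ∑ ab ∈ (Finset.range n) ×ˢ (Finset.range n), S ((ab.2 : Fin N) - (ab.1 : Fin N)) := by
          rw [Finset.sum_product]
      _ = ∑ d : Fin N, ∑ ab ∈ ((Finset.range n) ×ˢ (Finset.range n)).filter
            (fun ab => ((ab.2 : Fin N) - (ab.1 : Fin N)) = d),
            S ((ab.2 : Fin N) - (ab.1 : Fin N)) :=
          (Finset.sum_fiberwise _ _ _).symm
      _ = ∑ d : Fin N, ((n - min d.val (N - d.val) : ℕ) : ℝ) * S d := by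
          refine Finset.sum_congr rfl fun d _ => ?_
          rw [Finset.sum_congr rfl (fun ab hab => by rw [(Finset.mem_filter.1 hab).2]),
            Finset.sum_const, count2 N n h2 d, nsmul_eq_mul]
  -- Right-hand side
  have hR : 2 * (∑ r : Fin N, ∑ v : Fin N,
      (if r.val < v.val then ((n - circSep N r v : ℕ) : ℝ) * g r v else 0)) =
      ∑ d : Fin N, ((n - min d.val (N - d.val) : ℕ) : ℝ) * S d := by
    have hsym' : ∀ r v : Fin N, ((n - circSep N r v : ℕ) : ℝ) * g r v =
        ((n - circSep N v r : ℕ) : ℝ) * g v r := by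
      intro r v; rw [circSep_comm, hgsym]
    have := sym_double_sum (Finset.univ : Finset (Fin N))
      (fun r v => ((n - circSep N r v : ℕ) : ℝ) * g r v) hsym'
      (fun r => by simp [hgdiag r])
    rw [show (∑ r : Fin N, ∑ v : Fin N,
        (if r.val < v.val then ((n - circSep N r v : ℕ) : ℝ) * g r v else 0)) =
        ∑ r : Fin N, ∑ v : Fin N,
        (if r < v then ((n - circSep N r v : ℕ) : ℝ) * g r v else 0) from by
      simp_rw [Fin.lt_def]]
    rw [← this]
    calc ∑ r : Fin N, ∑ v : Fin N, ((n - circSep N r v : ℕ) : ℝ) * g r v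
        = ∑ r : Fin N, ∑ d : Fin N, ((n - circSep N r (r + d) : ℕ) : ℝ) * g r (r + d) := by
          refine Finset.sum_congr rfl fun r _ => ?_
          exact (Equiv.sum_comp (Equiv.addLeft r)
            (fun v => ((n - circSep N r v : ℕ) : ℝ) * g r v)).symm
      _ = ∑ d : Fin N, ∑ r : Fin N, ((n - min d.val (N - d.val) : ℕ) : ℝ) * g r (r + d) := by
          rw [Finset.sum_comm]
          exact Finset.sum_congr rfl fun d _ => Finset.sum_congr rfl fun r _ => by
            rw [circSep_add]
      _ = ∑ d : Fin N, ((n - min d.val (N - d.val) : ℕ) : ℝ) * S d := by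
          refine Finset.sum_congr rfl fun d _ => ?_
          rw [hS, ← Finset.mul_sum]
  have key := hL.trans hR.symm
  exact mul_left_cancel₀ (two_ne_zero) key
end

section
/- The expected energy distance of the circular design decomposes as Ē(u; n) = (1/N)∑_{i∈U} Φ_i − (2/(N n²)) R(u), where R(u) = ∑_{j=1}^N ∑_{i<k, i,k∈s_j} ‖x_{u_i} − x_{u_k}‖. Consequently, minimizing Ē(u;n) over permutations u is equivalent to maximizing R(u). -/
open Finset MeasureTheory
open Fin.NatCast

noncomputable section

/-- The empirical (uniform) probability measure of the points `{x_i : i ∈ s}`. -/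
def empMeasure {p N : ℕ} (x : Fin N → EuclideanSpace ℝ (Fin p)) (s : Finset (Fin N)) :
    Measure (EuclideanSpace ℝ (Fin p)) :=
  (s.card : ENNReal)⁻¹ • ∑ i ∈ s, Measure.dirac (x i)

/-- `E‖X − Z‖` for independent `X ∼ P`, `Z ∼ Q`. -/
def meanDist {p : ℕ} (P Q : Measure (EuclideanSpace ℝ (Fin p))) : ℝ :=
  ∫ a, ∫ b, ‖a - b‖ ∂Q ∂P

/-- Energy distance `E(P,Q) = 2E‖X − Z‖ − E‖X − X'‖ − E‖Z − Z'‖`. -/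
def energyDist {p : ℕ} (P Q : Measure (EuclideanSpace ℝ (Fin p))) : ℝ :=
  2 * meanDist P Q - meanDist P P - meanDist Q Q

/-- The contiguous circular window (as a set of units) of length `n` starting at position
`j` of the circular sequence `u`. -/
def window (N n : ℕ) [NeZero N] (u : Equiv.Perm (Fin N)) (j : Fin N) : Finset (Fin N) :=
  (Finset.range n).image fun k : ℕ => u (j + (k : Fin N))

/-- The expected energy distance `Ē(u;n) = (1/N) ∑_{j=1}^N E(F_{s_j}, F_U)` of the circular
design given by the sequence `u`. -/
def expectedED {p : ℕ} (N n : ℕ) [NeZero N] (x : Fin N → EuclideanSpace ℝ (Fin p))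
    (u : Equiv.Perm (Fin N)) : ℝ :=
  (1 / N : ℝ) * ∑ j : Fin N, energyDist (empMeasure x (window N n u j)) (empMeasure x Finset.univ)

/-- The aggregated within-window repulsion
`R(u) = ∑_{j=1}^N ∑_{i<k, i,k ∈ s_j} ‖x_{u_i} − x_{u_k}‖`. -/
def aggRepulsion {p : ℕ} (N n : ℕ) [NeZero N] (x : Fin N → EuclideanSpace ℝ (Fin p))
    (u : Equiv.Perm (Fin N)) : ℝ :=
  ∑ j : Fin N, ∑ a ∈ Finset.range n, ∑ b ∈ Finset.range n,
    (if a < b then ‖x (u (j + (a : Fin N))) - x (u (j + (b : Fin N)))‖ else 0)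
lemma my_integrable_dirac {α : Type*} [MeasurableSpace α] [MeasurableSingletonClass α]
    (f : α → ℝ) (a : α) : Integrable f (Measure.dirac a) := by
  have h : f =ᵐ[Measure.dirac a] fun _ => f a := by
    rw [MeasureTheory.ae_dirac_eq]; exact Filter.eventually_pure.2 rfl
  exact (integrable_const (f a)).congr h.symm

lemma integral_empMeasure {p N : ℕ} (x : Fin N → EuclideanSpace ℝ (Fin p))
    (s : Finset (Fin N)) (f : EuclideanSpace ℝ (Fin p) → ℝ) :
    ∫ a, f a ∂(empMeasure x s) = (s.card : ℝ)⁻¹ * ∑ i ∈ s, f (x i) := by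
  unfold empMeasure
  rw [integral_smul_measure, integral_finset_sum_measure (fun i _ => my_integrable_dirac f (x i))]
  simp [integral_dirac, ENNReal.toReal_inv, smul_eq_mul]

lemma meanDist_emp {p N : ℕ} (x : Fin N → EuclideanSpace ℝ (Fin p)) (s t : Finset (Fin N)) :
    meanDist (empMeasure x s) (empMeasure x t) =
      (s.card : ℝ)⁻¹ * (t.card : ℝ)⁻¹ * ∑ i ∈ s, ∑ k ∈ t, ‖x i - x k‖ := by
  unfold meanDist
  rw [integral_empMeasure x s (fun a => ∫ b, ‖a - b‖ ∂(empMeasure x t))]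
  rw [Finset.mul_sum, Finset.mul_sum]
  congr 1
  ext i
  rw [integral_empMeasure x t (fun b => ‖x i - b‖)]
  ring

lemma window_inj {N n : ℕ} [NeZero N] (hnN : n ≤ N) (u : Equiv.Perm (Fin N)) (j : Fin N) :
    ∀ a ∈ Finset.range n, ∀ b ∈ Finset.range n,
      u (j + (a : Fin N)) = u (j + (b : Fin N)) → a = b := by
  intro a ha b hb h
  have h1 : (a : Fin N) = (b : Fin N) := add_left_cancel (u.injective h)
  have h2 : a % N = b % N := by
    simpa [Fin.val_natCast] using congrArg Fin.val h1
  rwa [Nat.mod_eq_of_lt (lt_of_lt_of_le (Finset.mem_range.1 ha) hnN),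
    Nat.mod_eq_of_lt (lt_of_lt_of_le (Finset.mem_range.1 hb) hnN)] at h2

lemma sum_window {p N n : ℕ} [NeZero N] (hnN : n ≤ N) (x : Fin N → EuclideanSpace ℝ (Fin p))
    (u : Equiv.Perm (Fin N)) (j : Fin N) (f : Fin N → ℝ) :
    ∑ i ∈ window N n u j, f i = ∑ a ∈ Finset.range n, f (u (j + (a : Fin N))) :=
  Finset.sum_image (window_inj hnN u j)

lemma card_window {N n : ℕ} [NeZero N] (hnN : n ≤ N) (u : Equiv.Perm (Fin N)) (j : Fin N) :
    (window N n u j).card = n := by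
  rw [window, Finset.card_image_of_injOn (fun a ha b hb => window_inj hnN u j a ha b hb),
    Finset.card_range]

lemma sum_shift {N n : ℕ} [NeZero N] (u : Equiv.Perm (Fin N)) (g : Fin N → ℝ) :
    ∑ j : Fin N, ∑ a ∈ Finset.range n, g (u (j + (a : Fin N))) = n * ∑ i : Fin N, g i := by
  rw [Finset.sum_comm]
  have h : ∀ a : ℕ, ∑ j : Fin N, g (u (j + (a : Fin N))) = ∑ i : Fin N, g i := by
    intro a
    exact Equiv.sum_comp ((Equiv.addRight ((a : Fin N))).trans u) g
  simp [h, Finset.sum_const, Finset.card_range, nsmul_eq_mul]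

lemma double_sum_eq_two_strict {n : ℕ} (d : ℕ → ℕ → ℝ)
    (hsymm : ∀ a b, d a b = d b a) (hdiag : ∀ a, d a a = 0) :
    ∑ a ∈ Finset.range n, ∑ b ∈ Finset.range n, d a b =
      2 * ∑ a ∈ Finset.range n, ∑ b ∈ Finset.range n, (if a < b then d a b else 0) := by
  have key : ∀ a b : ℕ, d a b =
      (if a < b then d a b else 0) + (if b < a then d a b else 0) := by
    intro a b
    rcases lt_trichotomy a b with h | h | h
    · simp [h, not_lt_of_gt h]
    · simp [h, hdiag]
    · simp [h, not_lt_of_gt h]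
  calc ∑ a ∈ Finset.range n, ∑ b ∈ Finset.range n, d a b
      = ∑ a ∈ Finset.range n, ∑ b ∈ Finset.range n,
          ((if a < b then d a b else 0) + (if b < a then d a b else 0)) := by
        apply Finset.sum_congr rfl; intro a _; apply Finset.sum_congr rfl; intro b _; exact key a b
    _ = (∑ a ∈ Finset.range n, ∑ b ∈ Finset.range n, (if a < b then d a b else 0))
        + ∑ a ∈ Finset.range n, ∑ b ∈ Finset.range n, (if b < a then d a b else 0) := by
        simp [Finset.sum_add_distrib]
    _ = 2 * ∑ a ∈ Finset.range n, ∑ b ∈ Finset.range n, (if a < b then d a b else 0) := by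
        rw [Finset.sum_comm (f := fun a b => if b < a then d a b else 0)]
        have : ∀ a b : ℕ, (if a < b then d b a else 0) = (if a < b then d a b else 0) := by
          intro a b; rcases lt_or_ge a b with h | h <;> simp [h, hsymm, not_lt_of_ge]
        simp only [this]
        ring
/-- The expected energy distance of the circular design decomposes as
`Ē(u;n) = (1/N) ∑_{i∈U} Φ_i − (2/(N n²)) R(u)` with
`Φ_i = (1/N) ∑_{k∈U} ‖x_i − x_k‖`; consequently, minimizing `Ē(u;n)` over permutations `u`
is equivalent to maximizing `R(u)`. -/
theorem expectedED_decomposition {p : ℕ} (N n : ℕ) [NeZero N]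
    (hn : 0 < n) (h2 : 2 * n ≤ N)
    (x : Fin N → EuclideanSpace ℝ (Fin p)) :
    (∀ u : Equiv.Perm (Fin N),
      expectedED N n x u =
        (1 / N : ℝ) * (∑ i : Fin N, (1 / N : ℝ) * ∑ k : Fin N, ‖x i - x k‖)
          - (2 / ((N : ℝ) * (n : ℝ) ^ 2)) * aggRepulsion N n x u) ∧
    (∀ u u' : Equiv.Perm (Fin N),
      expectedED N n x u ≤ expectedED N n x u' ↔
        aggRepulsion N n x u' ≤ aggRepulsion N n x u) := by
  have hnN : n ≤ N := le_trans (Nat.le_mul_of_pos_left n (by norm_num)) h2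
  have hNpos : (0 : ℝ) < N := by exact_mod_cast Nat.pos_of_ne_zero (NeZero.ne N)
  have hnpos : (0 : ℝ) < n := by exact_mod_cast hn
  have hN0 : (N : ℝ) ≠ 0 := ne_of_gt hNpos
  have hn0 : (n : ℝ) ≠ 0 := ne_of_gt hnpos
  set T : ℝ := ∑ i : Fin N, ∑ k : Fin N, ‖x i - x k‖ with hT
  have main : ∀ u : Equiv.Perm (Fin N),
      expectedED N n x u =
        (1 / N : ℝ) * (∑ i : Fin N, (1 / N : ℝ) * ∑ k : Fin N, ‖x i - x k‖)
          - (2 / ((N : ℝ) * (n : ℝ) ^ 2)) * aggRepulsion N n x u := by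
    intro u
    have hED : ∀ j : Fin N,
        energyDist (empMeasure x (window N n u j)) (empMeasure x Finset.univ) =
          (2 * (n : ℝ)⁻¹ * (N : ℝ)⁻¹) *
            (∑ a ∈ Finset.range n, ∑ k : Fin N, ‖x (u (j + (a : Fin N))) - x k‖)
          - ((n : ℝ)⁻¹ * (n : ℝ)⁻¹) *
            (∑ a ∈ Finset.range n, ∑ b ∈ Finset.range n,
              ‖x (u (j + (a : Fin N))) - x (u (j + (b : Fin N)))‖)
          - ((N : ℝ)⁻¹ * (N : ℝ)⁻¹) * T := by
      intro j
      have hw1 : ∑ i ∈ window N n u j, ∑ k ∈ Finset.univ, ‖x i - x k‖ =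
          ∑ a ∈ Finset.range n, ∑ k : Fin N, ‖x (u (j + (a : Fin N))) - x k‖ :=
        sum_window hnN x u j _
      have hw2 : ∑ i ∈ window N n u j, ∑ k ∈ window N n u j, ‖x i - x k‖ =
          ∑ a ∈ Finset.range n, ∑ b ∈ Finset.range n,
            ‖x (u (j + (a : Fin N))) - x (u (j + (b : Fin N)))‖ := by
        rw [sum_window hnN x u j]
        exact Finset.sum_congr rfl fun a _ => sum_window hnN x u j _
      unfold energyDist
      rw [meanDist_emp, meanDist_emp, meanDist_emp, card_window hnN, Finset.card_univ,
        Fintype.card_fin, hw1, hw2]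
      rw [hT]
      ring
    have hS : ∑ j : Fin N, ∑ a ∈ Finset.range n, ∑ k : Fin N,
        ‖x (u (j + (a : Fin N))) - x k‖ = n * T :=
      sum_shift u (fun i => ∑ k : Fin N, ‖x i - x k‖)
    have hTj : ∀ j : Fin N,
        (∑ a ∈ Finset.range n, ∑ b ∈ Finset.range n,
          ‖x (u (j + (a : Fin N))) - x (u (j + (b : Fin N)))‖) =
        2 * ∑ a ∈ Finset.range n, ∑ b ∈ Finset.range n,
          (if a < b then ‖x (u (j + (a : Fin N))) - x (u (j + (b : Fin N)))‖ else 0) := by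
      intro j
      exact double_sum_eq_two_strict
        (fun a b => ‖x (u (j + (a : Fin N))) - x (u (j + (b : Fin N)))‖)
        (fun a b => norm_sub_rev _ _) (fun a => by simp)
    have hsum : ∑ j : Fin N,
        energyDist (empMeasure x (window N n u j)) (empMeasure x Finset.univ) =
        (2 * (n : ℝ)⁻¹ * (N : ℝ)⁻¹) * (n * T)
          - ((n : ℝ)⁻¹ * (n : ℝ)⁻¹) * (2 * aggRepulsion N n x u)
          - (N : ℝ) * (((N : ℝ)⁻¹ * (N : ℝ)⁻¹) * T) := by
      simp only [hED, hTj]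
      rw [Finset.sum_sub_distrib, Finset.sum_sub_distrib, ← Finset.mul_sum, ← Finset.mul_sum,
        hS, Finset.sum_const, Finset.card_univ, Fintype.card_fin, nsmul_eq_mul]
      rw [aggRepulsion, Finset.mul_sum]
      simp [Finset.mul_sum]
    rw [expectedED, hsum, ← Finset.mul_sum, hT]
    field_simp
    ring
  refine ⟨main, fun u u' => ?_⟩
  have hc : (0 : ℝ) < 2 / ((N : ℝ) * (n : ℝ) ^ 2) :=
    div_pos two_pos (mul_pos hNpos (pow_pos hnpos 2))
  rw [main u, main u', sub_le_sub_iff_left, mul_le_mul_iff_right₀ hc]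

end
end
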